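/- Let K ⊆ ℝⁿ be a closed convex cone containing no lines. Then K equals the closure of the convex cone generated by its exposed rays. -/

import Mathlib

open Set Metric
open scoped RealInnerProductSpace

section Helpers


-- helper: finite nonneg combinations of cone elements stay in the cone-set
lemma sum_mem_coneSet {V : Type*} [AddCommGroup V] [Module ℝ V]
    (Ks : Set V) (h0 : 0 ∈ Ks) (hadd : ∀ x ∈ Ks, ∀ y ∈ Ks, x + y ∈ Ks)
    (hsmul : ∀ (c : ℝ), 0 < c → ∀ x ∈ Ks, c • x ∈ Ks)
    {ι : Type*} (t : Finset ι) (w : ι → ℝ) (z : ι → V)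
    (hw : ∀ i ∈ t, 0 ≤ w i) (hz : ∀ i ∈ t, z i ∈ Ks) :
    ∑ i ∈ t, w i • z i ∈ Ks := by
  refine Finset.sum_induction _ (· ∈ Ks) (fun a b ha hb => hadd a ha b hb) h0 (fun i hi => ?_)
  rcases lt_or_eq_of_le (hw i hi) with h | h
  · exact hsmul _ h _ (hz i hi)
  · rw [← h, zero_smul]; exact h0


lemma isCompact_convexHull_fd {E : Type*} [NormedAddCommGroup E] [NormedSpace ℝ E]
    [FiniteDimensional ℝ E] {A : Set E} (hA : IsCompact A) :
    IsCompact (convexHull ℝ A) := by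
  rcases A.eq_empty_or_nonempty with rfl | ⟨a0, ha0⟩
  · simp
  set d := Module.finrank ℝ E + 1 with hd
  set g : (Fin d → ℝ) × (Fin d → E) → E := fun p => ∑ i, p.1 i • p.2 i with hg
  have hgcont : Continuous g := by
    apply continuous_finset_sum
    intro i _
    exact ((continuous_apply i).comp continuous_fst).smul
      ((continuous_apply i).comp continuous_snd)
  have hQ : IsCompact ((stdSimplex ℝ (Fin d)) ×ˢ (Set.univ.pi fun _ : Fin d => A)) :=
    (isCompact_stdSimplex ℝ _).prod (isCompact_univ_pi fun _ => hA)
  have himg : convexHull ℝ A = g '' ((stdSimplex ℝ (Fin d)) ×ˢ (Set.univ.pi fun _ : Fin d => A)) := by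
    apply Set.Subset.antisymm
    · intro x hx
      obtain ⟨ι, hfin, z, w, hzA, hai, hw0, hw1, hws⟩ :=
        eq_pos_convex_span_of_mem_convexHull hx
      have hcard : Fintype.card ι ≤ d := by
        refine le_trans hai.card_le_finrank_succ ?_
        have := Submodule.finrank_le (vectorSpan ℝ (Set.range z))
        omega
      obtain ⟨ψ⟩ : Nonempty (ι ↪ Fin d) :=
        Function.Embedding.nonempty_of_card_le (by simpa using hcard)
      classical
      set w' : Fin d → ℝ := Function.extend ψ w 0 with hw'
      set z' : Fin d → E := Function.extend ψ z (fun _ => a0) with hz'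
      have hext : ∀ i, w' (ψ i) = w i := fun i => ψ.injective.extend_apply _ _ _
      have hextz : ∀ i, z' (ψ i) = z i := fun i => ψ.injective.extend_apply _ _ _
      have hw'0 : ∀ j, 0 ≤ w' j := by
        intro j
        by_cases h : ∃ i, ψ i = j
        · obtain ⟨i, rfl⟩ := h; rw [hext]; exact (hw0 i).le
        · rw [hw', Function.extend_apply' _ _ _ h]; rfl
      have hz'A : ∀ j, z' j ∈ A := by
        intro j
        by_cases h : ∃ i, ψ i = j
        · obtain ⟨i, rfl⟩ := h; rw [hextz]; exact hzA ⟨i, rfl⟩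
        · rw [hz', Function.extend_apply' _ _ _ h]; exact ha0
      have himage : ∀ (F : Fin d → ℝ), (∀ j, ¬(∃ i, ψ i = j) → F j = 0) →
          ∑ j, F j = ∑ i, F (ψ i) := by
        intro F hF
        have h2 : ∑ j ∈ Finset.univ.image ψ, F j = ∑ i, F (ψ i) :=
          Finset.sum_image (fun a _ b _ h => ψ.injective h)
        rw [← h2]
        refine (Finset.sum_subset (Finset.subset_univ _) ?_).symm
        intro j _ hj
        refine hF j fun ⟨i, hi⟩ => hj (Finset.mem_image.2 ⟨i, Finset.mem_univ _, hi⟩)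
      have himageE : ∀ (F : Fin d → E), (∀ j, ¬(∃ i, ψ i = j) → F j = 0) →
          ∑ j, F j = ∑ i, F (ψ i) := by
        intro F hF
        have h2 : ∑ j ∈ Finset.univ.image ψ, F j = ∑ i, F (ψ i) :=
          Finset.sum_image (fun a _ b _ h => ψ.injective h)
        rw [← h2]
        refine (Finset.sum_subset (Finset.subset_univ _) ?_).symm
        intro j _ hj
        refine hF j fun ⟨i, hi⟩ => hj (Finset.mem_image.2 ⟨i, Finset.mem_univ _, hi⟩)
      have key1 : ∑ j, w' j = 1 := by
        have h1 : ∀ (j : Fin d), ¬(∃ i, ψ i = j) → w' j = 0 := by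
          intro j hj; rw [hw', Function.extend_apply' _ _ _ hj]; rfl
        rw [himage w' h1]
        simp only [hext]
        exact hw1
      have key2 : ∑ j, w' j • z' j = x := by
        have h1 : ∀ (j : Fin d), ¬(∃ i, ψ i = j) → w' j • z' j = 0 := by
          intro j hj
          rw [hw', Function.extend_apply' _ _ _ hj]
          simp
        rw [himageE _ h1]
        simp only [hext, hextz]
        exact hws
      exact ⟨(w', z'), ⟨⟨hw'0, key1⟩, fun j _ => hz'A j⟩, key2⟩
    · rintro x ⟨⟨w, z⟩, ⟨hw, hz⟩, rfl⟩
      have hw0 : ∀ i, 0 ≤ w i := fun i => hw.1 i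
      exact mem_convexHull_of_exists_fintype w z hw0 hw.2 (fun i => hz i (Set.mem_univ i)) rfl
  rw [himg]
  exact hQ.image hgcont


lemma straszewicz {E : Type*} [NormedAddCommGroup E] [InnerProductSpace ℝ E] [CompleteSpace E]
    (C : Set E) (hC : IsCompact C) (hconv : Convex ℝ C) :
    C ⊆ closure (convexHull ℝ (C.exposedPoints ℝ)) := by
  set D := closure (convexHull ℝ (C.exposedPoints ℝ)) with hD
  intro x hx
  by_contra hxD
  have hDC : D ⊆ C := closure_minimal (convexHull_min exposedPoints_subset hconv) hC.isClosed
  have hDconv : Convex ℝ D := (convex_convexHull ℝ _).closure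
  obtain ⟨f, u, hfD, hfx⟩ := geometric_hahn_banach_closed_point hDconv isClosed_closure hxD
  set e := (InnerProductSpace.toDual ℝ E).symm f with he
  have hee : ∀ w, ⟪e, w⟫ = f w := fun w => InnerProductSpace.toDual_symm_apply
  set δ := f x - u with hδ
  have hδpos : 0 < δ := sub_pos.2 hfx
  obtain ⟨r, hr⟩ := hC.isBounded.subset_closedBall x
  set M := max r 0 with hM
  have hMC : ∀ z ∈ C, ‖z - x‖ ≤ M := fun z hz =>
    le_trans (by simpa [dist_eq_norm] using hr hz) (le_max_left _ _)
  set lam := M ^ 2 / (2 * δ) + 1 with hlam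
  have hlampos : 0 < lam := by positivity
  have hlamkey : M ^ 2 - 2 * lam * δ < 0 := by
    have : 2 * lam * δ = M ^ 2 + 2 * δ := by rw [hlam]; field_simp
    nlinarith
  set y := x - lam • e with hy
  have hxy : ‖x - y‖ = lam * ‖e‖ := by
    rw [hy, sub_sub_cancel, norm_smul, Real.norm_eq_abs, abs_of_pos hlampos]
  have key : ∀ z ∈ D, ‖z - y‖ < ‖x - y‖ := by
    intro z hz
    have h1 : z - y = (z - x) + lam • e := by rw [hy]; abel
    have h2 : ‖z - y‖ ^ 2 = ‖z - x‖ ^ 2 + 2 * (lam * ⟪e, z - x⟫) + lam ^ 2 * ‖e‖ ^ 2 := by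
      rw [h1, @norm_add_sq_real, real_inner_smul_right, norm_smul, Real.norm_eq_abs,
        abs_of_pos hlampos, real_inner_comm, mul_pow]
    have h3 : ⟪e, z - x⟫ ≤ -δ := by
      rw [hee, map_sub]
      have := hfD z hz
      simp only [hδ]; linarith
    have h4 : ‖z - x‖ ≤ M := hMC z (hDC hz)
    have h5 : ‖z - y‖ ^ 2 < (lam * ‖e‖) ^ 2 := by
      have h6 : lam * ⟪e, z - x⟫ ≤ lam * (-δ) := mul_le_mul_of_nonneg_left h3 hlampos.le
      have hzx : ‖z - x‖ ^ 2 ≤ M ^ 2 := by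
        have := norm_nonneg (z - x); nlinarith
      rw [h2, mul_pow]; nlinarith
    rw [hxy]
    have hb : 0 ≤ lam * ‖e‖ := by positivity
    exact lt_of_pow_lt_pow_left₀ 2 hb h5
  -- farthest point
  obtain ⟨z, hzC, hzmax⟩ := hC.exists_isMaxOn ⟨x, hx⟩
    ((continuous_id.dist continuous_const).continuousOn (s := C) (f := fun w => dist w y))
  have hzmax' : ∀ w ∈ C, ‖w - y‖ ≤ ‖z - y‖ := by
    intro w hw
    have := hzmax hw
    simpa [dist_eq_norm] using this
  -- z is an exposed point of C
  have hzexp : z ∈ C.exposedPoints ℝ := by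
    rw [exposed_point_def]
    refine ⟨hzC, innerSL ℝ (z - y), fun w hw => ?_⟩
    have hCS : ⟪z - y, w - y⟫ ≤ ‖z - y‖ ^ 2 := by
      calc ⟪z - y, w - y⟫ ≤ ‖z - y‖ * ‖w - y‖ := real_inner_le_norm _ _
      _ ≤ ‖z - y‖ * ‖z - y‖ := mul_le_mul_of_nonneg_left (hzmax' w hw) (norm_nonneg _)
      _ = ‖z - y‖ ^ 2 := (sq (‖z - y‖)).symm
    have hdiff : ⟪z - y, w⟫ - ⟪z - y, z⟫ = ⟪z - y, w - y⟫ - ‖z - y‖ ^ 2 := by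
      have e1 : ⟪z - y, w - y⟫ = ⟪z - y, w⟫ - ⟪z - y, y⟫ := inner_sub_right _ _ _
      have e2 : ⟪z - y, z - y⟫ = ⟪z - y, z⟫ - ⟪z - y, y⟫ := inner_sub_right _ _ _
      have e3 : ⟪z - y, z - y⟫ = ‖z - y‖ ^ 2 := real_inner_self_eq_norm_sq _
      linarith
    have happ : ∀ v, (innerSL ℝ (z - y)) v = ⟪z - y, v⟫ := fun v => rfl
    constructor
    · rw [happ, happ]; linarith
    · intro hle
      rw [happ, happ] at hle
      have hge : ‖z - y‖ ^ 2 ≤ ⟪z - y, w - y⟫ := by linarith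
      have hsq : ‖w - z‖ ^ 2 ≤ 0 := by
        have e4 : w - z = (w - y) - (z - y) := by abel
        have e5 : ‖(w - y) - (z - y)‖ ^ 2
            = ‖w - y‖ ^ 2 - 2 * ⟪w - y, z - y⟫ + ‖z - y‖ ^ 2 := norm_sub_sq_real _ _
        have e6 : ⟪w - y, z - y⟫ = ⟪z - y, w - y⟫ := real_inner_comm _ _
        have e7 : ‖w - y‖ ^ 2 ≤ ‖z - y‖ ^ 2 := by
          have := hzmax' w hw
          have := norm_nonneg (w - y); nlinarith
        rw [e4, e5, e6]; linarith
      have : ‖w - z‖ = 0 := by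
        have := norm_nonneg (w - z); nlinarith
      rwa [norm_eq_zero, sub_eq_zero] at this
  have hzD : z ∈ D := subset_closure (subset_convexHull ℝ _ hzexp)
  exact absurd (hzmax' x hx) (not_le.2 (key z hzD))

end Helpers

/-- The ray `ℝ_{≥0} · v` spanned by a vector `v`. -/
def rayOf {E : Type*} [SMul ℝ E] (v : E) : Set E := {x | ∃ t : ℝ, 0 ≤ t ∧ x = t • v}

/-- A subset R of a convex cone K is an exposed ray of K if R = ℝ_{≥0}·v for some
nonzero v ∈ K and there is a linear functional H with H ≥ 0 on K whose zero locus
inside K is exactly R. -/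
def IsExposedRay (n : ℕ) (K : ConvexCone ℝ (Fin n → ℝ)) (R : Set (Fin n → ℝ)) : Prop :=
  ∃ v : Fin n → ℝ, v ≠ 0 ∧ v ∈ K ∧ R = rayOf v ∧
    ∃ H : (Fin n → ℝ) →ₗ[ℝ] ℝ, (∀ x ∈ K, 0 ≤ H x) ∧ {x | x ∈ K ∧ H x = 0} = R

/-- (Straszewicz's theorem for cones.) A closed convex cone K ⊆ ℝⁿ containing no lines
equals the closure of the convex cone generated by its exposed rays, i.e. the closure of
the set of all finite nonnegative linear combinations of vectors lying on exposed rays. -/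
theorem stmt_4 (n : ℕ) (K : ConvexCone ℝ (Fin n → ℝ))
    (hclosed : IsClosed (K : Set (Fin n → ℝ)))
    (h0 : (0 : Fin n → ℝ) ∈ K)
    (hnoline : ∀ x, x ∈ K → -x ∈ K → x = 0) :
    (K : Set (Fin n → ℝ)) =
      closure {x | ∃ (k : ℕ) (c : Fin k → ℝ) (w : Fin k → (Fin n → ℝ)),
        (∀ i, 0 ≤ c i) ∧ (∀ i, ∃ R, IsExposedRay n K R ∧ w i ∈ R) ∧
        x = ∑ i, c i • w i} := by
  classical
  set S := {x | ∃ (k : ℕ) (c : Fin k → ℝ) (w : Fin k → (Fin n → ℝ)),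
        (∀ i, 0 ≤ c i) ∧ (∀ i, ∃ R, IsExposedRay n K R ∧ w i ∈ R) ∧
        x = ∑ i, c i • w i} with hSdef
  -- S ⊆ K
  have hSK : S ⊆ (K : Set (Fin n → ℝ)) := by
    rintro x ⟨k, c, w, hc, hw, rfl⟩
    refine sum_mem_coneSet (K : Set (Fin n → ℝ)) h0 (fun a ha b hb => K.add_mem ha hb)
      (fun c hc x hx => K.smul_mem hc hx) Finset.univ c w (fun i _ => hc i) (fun i _ => ?_)
    obtain ⟨R, ⟨v, hv0, hvK, rfl, _⟩, hwi⟩ := hw i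
    obtain ⟨t, ht, htw⟩ := hwi
    rw [htw]
    rcases lt_or_eq_of_le ht with h | h
    · exact K.smul_mem h hvK
    · rw [← h, zero_smul]; exact h0
  -- 0 ∈ S
  have hS0 : (0 : Fin n → ℝ) ∈ S := by
    refine ⟨0, Fin.elim0, Fin.elim0, fun i => i.elim0, fun i => i.elim0, by simp⟩
  -- S closed under nonneg smul
  have hSsmul : ∀ (t : ℝ), 0 ≤ t → ∀ x ∈ S, t • x ∈ S := by
    rintro t ht x ⟨k, c, w, hc, hw, rfl⟩
    refine ⟨k, fun i => t * c i, w, fun i => mul_nonneg ht (hc i), hw, ?_⟩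
    rw [Finset.smul_sum]
    simp [smul_smul]
  -- S closed under addition
  have hSadd : ∀ x ∈ S, ∀ y ∈ S, x + y ∈ S := by
    rintro x ⟨k, c, w, hc, hw, rfl⟩ y ⟨m, d, v, hd, hv, rfl⟩
    refine ⟨k + m, Fin.append c d, Fin.append w v, fun i => ?_, fun i => ?_, ?_⟩
    · refine Fin.addCases (fun j => ?_) (fun j => ?_) i
      · simpa using hc j
      · simpa using hd j
    · refine Fin.addCases (fun j => ?_) (fun j => ?_) i
      · simpa using hw j
      · simpa using hv j
    · rw [Fin.sum_univ_add]
      simp [Fin.append_left, Fin.append_right]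
  have hSconv : Convex ℝ S := by
    intro a ha b hb θ σ hθ hσ hsum
    exact hSadd _ (hSsmul θ hθ a ha) _ (hSsmul σ hσ b hb)
  refine Set.Subset.antisymm ?_ (closure_minimal hSK hclosed)
  intro x hx
  by_cases hx0 : x = 0
  · exact subset_closure (by rw [hx0]; exact hS0)
  have hSexp : ∀ (b : Fin n → ℝ), (∃ R, IsExposedRay n K R ∧ b ∈ R) → b ∈ S := by
    intro b hb
    exact ⟨1, fun _ => 1, fun _ => b, fun i => zero_le_one, fun i => hb, by simp⟩
  set Ks : Set (EuclideanSpace ℝ (Fin n)) :=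
    WithLp.ofLp ⁻¹' (K : Set (Fin n → ℝ)) with hKs
  have hKsclosed : IsClosed Ks := hclosed.preimage (PiLp.continuous_ofLp ..)
  have hKsconv : Convex ℝ Ks := fun a ha b hb θ σ hθ hσ hsum => K.convex ha hb hθ hσ hsum
  have hKssmul : ∀ (c : ℝ), 0 < c → ∀ y ∈ Ks, c • y ∈ Ks := fun c hc y hy => K.smul_mem hc hy
  have hKsadd : ∀ y ∈ Ks, ∀ z ∈ Ks, y + z ∈ Ks := fun y hy z hz => K.add_mem hy hz
  have hKs0 : (0 : EuclideanSpace ℝ (Fin n)) ∈ Ks := h0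
  have hKsnoline : ∀ y ∈ Ks, -y ∈ Ks → y = 0 := fun y hy hy' =>
    WithLp.ofLp_injective 2 (hnoline _ hy hy')
  set xE : EuclideanSpace ℝ (Fin n) := WithLp.toLp 2 x with hxE
  have hxE0 : xE ≠ 0 := fun h => hx0 (congrArg WithLp.ofLp h)
  have hxEK : xE ∈ Ks := hx
  -- the compact slice of the sphere
  set A : Set (EuclideanSpace ℝ (Fin n)) := Ks ∩ sphere 0 1 with hA
  have hAcompact : IsCompact A := (isCompact_sphere 0 1).inter_left hKsclosed
  have hAK : A ⊆ Ks := inter_subset_left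
  set T := convexHull ℝ A with hT
  have hTcompact : IsCompact T := isCompact_convexHull_fd hAcompact
  have h0T : (0 : EuclideanSpace ℝ (Fin n)) ∉ T := by
    intro h0T
    rw [hT, convexHull_eq] at h0T
    obtain ⟨ι, t, wt, z, hw0, hw1, hzA, hcm⟩ := h0T
    rw [Finset.centerMass_eq_of_sum_1 _ _ hw1] at hcm
    have hex : ∃ i ∈ t, 0 < wt i := by
      by_contra hc
      push_neg at hc
      have := Finset.sum_nonpos hc
      rw [hw1] at this; linarith
    obtain ⟨i0, hi0t, hi0⟩ := hex
    have hsum : wt i0 • z i0 + ∑ i ∈ t.erase i0, wt i • z i = 0 := by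
      have h := Finset.add_sum_erase t (fun i => wt i • z i) hi0t
      rw [hcm] at h; exact h
    have hrest : ∑ i ∈ t.erase i0, wt i • z i ∈ Ks :=
      sum_mem_coneSet Ks hKs0 hKsadd hKssmul _ _ _
        (fun i hi => hw0 i (Finset.mem_of_mem_erase hi))
        (fun i hi => hAK (hzA i (Finset.mem_of_mem_erase hi)))
    have hmem : wt i0 • z i0 ∈ Ks := hKssmul _ hi0 _ (hAK (hzA i0 hi0t))
    have hneg : -(wt i0 • z i0) ∈ Ks := by
      rw [← eq_neg_of_add_eq_zero_right hsum]; exact hrest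
    have hz0 : wt i0 • z i0 = 0 := hKsnoline _ hmem hneg
    have : z i0 = 0 := by
      rcases smul_eq_zero.1 hz0 with h | h
      · exact absurd h hi0.ne'
      · exact h
    have hsph : ‖z i0‖ = 1 := by
      have := (hzA i0 hi0t).2
      rwa [mem_sphere_zero_iff_norm] at this
    rw [this, norm_zero] at hsph
    exact zero_ne_one hsph
  -- separating functional
  obtain ⟨f, u, hfu, hfT⟩ := geometric_hahn_banach_point_closed
    (convex_convexHull ℝ A) hTcompact.isClosed h0T
  have hu : 0 < u := by simpa using hfu
  have hflb : ∀ y ∈ Ks, u * ‖y‖ ≤ f y := by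
    intro y hy
    rcases eq_or_ne y 0 with rfl | hy0
    · simp
    · have hyn : (0:ℝ) < ‖y‖ := norm_pos_iff.2 hy0
      have hmem : ‖y‖⁻¹ • y ∈ A := by
        refine ⟨hKssmul _ (by positivity) _ hy, ?_⟩
        rw [mem_sphere_zero_iff_norm, norm_smul, Real.norm_eq_abs,
          abs_of_pos (by positivity), inv_mul_cancel₀ hyn.ne']
      have h1 := hfT _ (subset_convexHull ℝ A hmem)
      rw [map_smul, smul_eq_mul] at h1
      have h2 : u * ‖y‖ < (‖y‖⁻¹ * f y) * ‖y‖ := by nlinarith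
      calc u * ‖y‖ ≤ (‖y‖⁻¹ * f y) * ‖y‖ := h2.le
        _ = f y := by field_simp
  -- the base B
  set B : Set (EuclideanSpace ℝ (Fin n)) := Ks ∩ {y | f y = 1} with hB
  have hBconv : Convex ℝ B := by
    refine hKsconv.inter ?_
    intro a ha b hb p q hp hq hpq
    simp only [mem_setOf_eq] at ha hb ⊢
    rw [map_add, map_smul, map_smul, smul_eq_mul, smul_eq_mul, ha, hb]
    linarith
  have hBclosed : IsClosed B := hKsclosed.inter (isClosed_eq f.continuous continuous_const)
  have hBbdd : Bornology.IsBounded B := by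
    refine (isBounded_closedBall (x := (0 : EuclideanSpace ℝ (Fin n))) (r := u⁻¹)).subset ?_
    rintro y ⟨hyK, hy1⟩
    have h1 := hflb y hyK
    rw [mem_setOf_eq] at hy1
    rw [hy1] at h1
    rw [mem_closedBall_zero_iff]
    calc ‖y‖ = u⁻¹ * (u * ‖y‖) := by field_simp
      _ ≤ u⁻¹ * 1 := by
          apply mul_le_mul_of_nonneg_left h1 (by positivity)
      _ = u⁻¹ := mul_one _
  have hBcompact : IsCompact B := Metric.isCompact_of_isClosed_isBounded hBclosed hBbdd
  have hfx : 0 < f xE := by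
    have := hflb xE hxEK
    have hxn : (0:ℝ) < ‖xE‖ := norm_pos_iff.2 hxE0
    nlinarith
  set x' : EuclideanSpace ℝ (Fin n) := (f xE)⁻¹ • xE with hx'
  have hx'B : x' ∈ B := by
    refine ⟨hKssmul _ (by positivity) _ hxEK, ?_⟩
    rw [mem_setOf_eq, hx', map_smul, smul_eq_mul, inv_mul_cancel₀ hfx.ne']
  have hx'cl : x' ∈ closure (convexHull ℝ (B.exposedPoints ℝ)) :=
    straszewicz B hBcompact hBconv hx'B
  -- exposed points of the base lie in S
  have hEPS : B.exposedPoints ℝ ⊆ WithLp.ofLp ⁻¹' S := by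
    rintro b ⟨⟨hbK, hbf⟩, l, hl⟩
    rw [mem_setOf_eq] at hbf
    have hb0 : b ≠ 0 := by
      intro h; rw [h, map_zero] at hbf; exact zero_ne_one hbf
    have hray : IsExposedRay n K (rayOf (WithLp.ofLp b)) := by
      refine ⟨WithLp.ofLp b, fun h => hb0 (WithLp.ofLp_injective 2 h), hbK, rfl, ?_⟩
      set g : EuclideanSpace ℝ (Fin n) →ₗ[ℝ] ℝ :=
        l b • (f : EuclideanSpace ℝ (Fin n) →ₗ[ℝ] ℝ) - (l : EuclideanSpace ℝ (Fin n) →ₗ[ℝ] ℝ)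
        with hgdef
      have hgapp : ∀ y : EuclideanSpace ℝ (Fin n), g y = l b * f y - l y := by
        intro y
        simp [hgdef, smul_eq_mul]
      refine ⟨g.comp (WithLp.linearEquiv 2 ℝ (Fin n → ℝ)).symm.toLinearMap, ?_, ?_⟩
      · -- nonneg on K
        intro y hyK
        set yE : EuclideanSpace ℝ (Fin n) := WithLp.toLp 2 y with hyE
        have hyKs : yE ∈ Ks := hyK
        show (0:ℝ) ≤ g yE
        rw [hgapp]
        rcases eq_or_ne yE 0 with h | h
        · rw [h]; simp
        · have hfy : 0 < f yE := by
            have := hflb _ hyKs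
            have hyn : (0:ℝ) < ‖yE‖ := norm_pos_iff.2 h
            nlinarith
          set y0 : EuclideanSpace ℝ (Fin n) := (f yE)⁻¹ • yE with hy0
          have hy0B : y0 ∈ B := by
            refine ⟨hKssmul _ (by positivity) _ hyKs, ?_⟩
            rw [mem_setOf_eq, hy0, map_smul, smul_eq_mul, inv_mul_cancel₀ hfy.ne']
          have hle := (hl y0 hy0B).1
          rw [hy0, map_smul, smul_eq_mul] at hle
          have h2 : f yE * ((f yE)⁻¹ * l yE) ≤ f yE * l b :=
            mul_le_mul_of_nonneg_left hle hfy.le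
          have h3 : f yE * ((f yE)⁻¹ * l yE) = l yE := by field_simp
          rw [h3] at h2
          linarith
      · -- zero locus is the ray
        ext y
        constructor
        · rintro ⟨hyK, hHy⟩
          set yE : EuclideanSpace ℝ (Fin n) := WithLp.toLp 2 y with hyE
          have hyKs : yE ∈ Ks := hyK
          have hHy' : g yE = 0 := hHy
          rw [hgapp] at hHy'
          rcases eq_or_ne yE 0 with h | h
          · exact ⟨0, le_rfl, by rw [zero_smul]; exact congrArg WithLp.ofLp h⟩
          · have hfy : 0 < f yE := by
              have := hflb _ hyKs
              have hyn : (0:ℝ) < ‖yE‖ := norm_pos_iff.2 h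
              nlinarith
            set y0 : EuclideanSpace ℝ (Fin n) := (f yE)⁻¹ • yE with hy0
            have hy0B : y0 ∈ B := by
              refine ⟨hKssmul _ (by positivity) _ hyKs, ?_⟩
              rw [mem_setOf_eq, hy0, map_smul, smul_eq_mul, inv_mul_cancel₀ hfy.ne']
            have hlb : l b ≤ l y0 := by
              rw [hy0, map_smul, smul_eq_mul]
              have : l yE = l b * f yE := by linarith
              rw [this]
              field_simp
              exact le_rfl
            have hy0b : y0 = b := (hl y0 hy0B).2 hlb
            refine ⟨f yE, hfy.le, ?_⟩
            have : f yE • y0 = yE := by rw [hy0, smul_inv_smul₀ hfy.ne']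
            rw [hy0b] at this
            exact (congrArg WithLp.ofLp this).symm
        · rintro ⟨t, ht, rfl⟩
          constructor
          · show WithLp.toLp 2 (t • WithLp.ofLp b) ∈ Ks
            rcases lt_or_eq_of_le ht with h | h
            · exact hKssmul _ h _ hbK
            · rw [← h, zero_smul]; exact hKs0
          · show g (WithLp.toLp 2 (t • WithLp.ofLp b)) = 0
            have : WithLp.toLp 2 (t • WithLp.ofLp b) = t • b := rfl
            rw [this, hgapp, map_smul, map_smul, smul_eq_mul, smul_eq_mul, hbf]
            ring
    exact hSexp _ ⟨rayOf (WithLp.ofLp b), hray, 1, zero_le_one, (one_smul ℝ _).symm⟩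
  have hhull : convexHull ℝ (B.exposedPoints ℝ) ⊆ WithLp.ofLp ⁻¹' S :=
    convexHull_min hEPS (fun a ha b hb θ σ hθ hσ hsum => hSconv ha hb hθ hσ hsum)
  have hxcl : xE ∈ closure (WithLp.ofLp ⁻¹' S) := by
    have hcl : x' ∈ closure (WithLp.ofLp ⁻¹' S) :=
      closure_mono hhull hx'cl
    have hxx' : xE = f xE • x' := by
      rw [hx', smul_inv_smul₀ hfx.ne']
    rw [hxx']
    exact map_mem_closure (continuous_const_smul (f xE)) hcl
      (fun y hy => hSsmul (f xE) hfx.le y hy)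
  exact map_mem_closure (PiLp.continuous_ofLp ..) hxcl (fun y hy => hy)
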